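/- arXiv:2108.09923 — 4 statements merged into one kernel-verified Lean document; each statement's English description precedes it below -/
import Mathlib

section
/- Let X₁,…,X_q be normed linear spaces and let X = X₁ ⊕ ⋯ ⊕ X_q be their direct sum equipped with a norm ‖·‖ making it a normed linear space. Then ‖·‖ is absolute if and only if it has the maximum property, i.e., for every family of bounded linear operators T_i : X_i → X_i, the operator norm of the direct-sum operator T = T₁ ⊕ ⋯ ⊕ T_q induced by ‖·‖ equals max_{1 ≤ i ≤ q} ‖T_i‖, where ‖T_i‖ is the operator norm induced by the norm of X_i. -/
section aux
variable {q : ℕ} {X : Fin q → Type*}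
  [∀ i, NormedAddCommGroup (X i)] [∀ i, NormedSpace ℝ (X i)]
  {nrm : (∀ i, X i) → ℝ}

private lemma aux_nrm_zero (hhom : ∀ (a : ℝ) (x : ∀ i, X i), nrm (a • x) = |a| * nrm x) :
    nrm 0 = 0 := by
  have := hhom 0 0; simpa using this

private lemma aux_nrm_nonneg (hhom : ∀ (a : ℝ) (x : ∀ i, X i), nrm (a • x) = |a| * nrm x)
    (htri : ∀ x y : ∀ i, X i, nrm (x + y) ≤ nrm x + nrm y) (x : ∀ i, X i) : 0 ≤ nrm x := by
  have h1 : nrm ((-1:ℝ) • x) = nrm x := by rw [hhom]; simp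
  have h2 := htri x ((-1:ℝ) • x)
  have h3 : x + (-1:ℝ) • x = 0 := by simp [neg_one_smul]
  rw [h3, aux_nrm_zero hhom, h1] at h2
  linarith

private lemma aux_nrm_pos (hdef : ∀ x, nrm x = 0 → x = 0)
    (hhom : ∀ (a : ℝ) (x : ∀ i, X i), nrm (a • x) = |a| * nrm x)
    (htri : ∀ x y : ∀ i, X i, nrm (x + y) ≤ nrm x + nrm y)
    {x : ∀ i, X i} (hx : x ≠ 0) : 0 < nrm x :=
  lt_of_le_of_ne (aux_nrm_nonneg hhom htri x) (Ne.symm fun h0 => hx (hdef x h0))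

private lemma aux_mono_single
    (hhom : ∀ (a : ℝ) (x : ∀ i, X i), nrm (a • x) = |a| * nrm x)
    (htri : ∀ x y : ∀ i, X i, nrm (x + y) ≤ nrm x + nrm y)
    (hab : ∀ x y : ∀ i, X i, (∀ i, ‖x i‖ = ‖y i‖) → nrm x = nrm y)
    (j : Fin q) (x z : ∀ i, X i)
    (hne : ∀ i, i ≠ j → x i = z i) (hj : ‖x j‖ ≤ ‖z j‖) : nrm x ≤ nrm z := by
  by_cases hz : z j = 0
  · have hxz : x = z := funext fun i => by
      by_cases hi : i = j
      · subst hi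
        have h0 : ‖x i‖ = 0 := le_antisymm (by simpa [hz] using hj) (norm_nonneg _)
        rw [norm_eq_zero] at h0; rw [h0, hz]
      · exact hne i hi
    rw [hxz]
  · have hzpos : 0 < ‖z j‖ := norm_pos_iff.mpr hz
    set t : ℝ := ‖x j‖ / ‖z j‖ with ht
    have ht0 : 0 ≤ t := div_nonneg (norm_nonneg _) hzpos.le
    have ht1 : t ≤ 1 := (div_le_one hzpos).mpr hj
    set z' : ∀ i, X i := Function.update z j (-(z j)) with hz'def
    have hz' : nrm z' = nrm z := hab _ _ (fun i => by
      by_cases hi : i = j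
      · subst hi; simp [hz'def]
      · simp [hz'def, Function.update_of_ne hi])
    have hx' : nrm x = nrm (((1+t)/2) • z + ((1-t)/2) • z') := by
      apply hab
      intro i
      by_cases hi : i = j
      · subst hi
        have hcomp : (((1+t)/2) • z + ((1-t)/2) • z') i = t • z i := by
          simp only [Pi.add_apply, Pi.smul_apply, hz'def, Function.update_self]
          module
        rw [hcomp, norm_smul, Real.norm_eq_abs, abs_of_nonneg ht0, ht]
        field_simp
      · have hcomp : (((1+t)/2) • z + ((1-t)/2) • z') i = z i := by
          simp only [Pi.add_apply, Pi.smul_apply, hz'def, Function.update_of_ne hi]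
          module
        rw [hcomp, hne i hi]
    rw [hx']
    calc nrm (((1+t)/2) • z + ((1-t)/2) • z')
        ≤ nrm (((1+t)/2) • z) + nrm (((1-t)/2) • z') := htri _ _
      _ = ((1+t)/2) * nrm z + ((1-t)/2) * nrm z := by
          rw [hhom, hhom, hz', abs_of_nonneg (by linarith), abs_of_nonneg (by linarith)]
      _ = nrm z := by ring

private lemma aux_mono
    (hhom : ∀ (a : ℝ) (x : ∀ i, X i), nrm (a • x) = |a| * nrm x)
    (htri : ∀ x y : ∀ i, X i, nrm (x + y) ≤ nrm x + nrm y)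
    (hab : ∀ x y : ∀ i, X i, (∀ i, ‖x i‖ = ‖y i‖) → nrm x = nrm y)
    (x y : ∀ i, X i) (h : ∀ i, ‖x i‖ ≤ ‖y i‖) : nrm x ≤ nrm y := by
  suffices H : ∀ s : Finset (Fin q), ∀ x y : ∀ i, X i, (∀ i, ‖x i‖ ≤ ‖y i‖) →
      (∀ i ∉ s, x i = y i) → nrm x ≤ nrm y by
    exact H Finset.univ x y h (fun i hi => absurd (Finset.mem_univ i) hi)
  intro s
  induction s using Finset.induction_on with
  | empty =>
    intro x y hxy hout
    rw [show x = y from funext fun i => hout i (by simp)]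
  | @insert j t hjt ih =>
    intro x y hxy hout
    set z : ∀ i, X i := Function.update x j (y j) with hzdef
    have h1 : nrm x ≤ nrm z := by
      apply aux_mono_single hhom htri hab j x z
      · intro i hi; simp [hzdef, Function.update_of_ne hi]
      · simpa [hzdef] using hxy j
    have h2 : nrm z ≤ nrm y := by
      apply ih
      · intro i
        by_cases hi : i = j
        · subst hi; simp [hzdef]
        · simpa [hzdef, Function.update_of_ne hi] using hxy i
      · intro i hi
        by_cases hij : i = j
        · subst hij; simp [hzdef]
        · have : i ∉ insert j t := by simp [hij, hi]
          simpa [hzdef, Function.update_of_ne hij] using hout i this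
    exact h1.trans h2

end aux

/-- **Absolute norms have the maximum property, and conversely.**
Let `X₁,…,X_q` be (nontrivial) normed linear spaces and let `nrm` be a norm on
the direct sum `X = X₁ ⊕ ⋯ ⊕ X_q` (given by its defining properties:
definiteness, absolute homogeneity and the triangle inequality).  Then `nrm` is
absolute (i.e. `nrm x` depends only on the component norms `‖x i‖`) if and only
if it has the maximum property: for every family of bounded operators
`T i : X i →L X i`, the operator norm of the direct-sum operator
`x ↦ (T₁ x₁, …, T_q x_q)` induced by `nrm` — i.e. the least upper bound of the
set `{ nrm (T x) / nrm x | x ≠ 0 }` — equals `max_i ‖T i‖`. -/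
theorem absolute_norm_iff_maximum_property
    {q : ℕ} (hq : 0 < q) (X : Fin q → Type*)
    [∀ i, NormedAddCommGroup (X i)] [∀ i, NormedSpace ℝ (X i)]
    [∀ i, Nontrivial (X i)]
    (nrm : (∀ i, X i) → ℝ)
    (hdef : ∀ x, nrm x = 0 → x = 0)
    (hhom : ∀ (a : ℝ) (x : ∀ i, X i), nrm (a • x) = |a| * nrm x)
    (htri : ∀ x y : ∀ i, X i, nrm (x + y) ≤ nrm x + nrm y) :
    (∀ x y : ∀ i, X i, (∀ i, ‖x i‖ = ‖y i‖) → nrm x = nrm y)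
      ↔
    (∀ T : ∀ i, X i →L[ℝ] X i,
      IsLUB {c : ℝ | ∃ x : ∀ i, X i, x ≠ 0 ∧ c = nrm (fun i => T i (x i)) / nrm x}
        (Finset.univ.sup' ⟨⟨0, hq⟩, Finset.mem_univ _⟩ (fun i => ‖T i‖))) := by
  constructor
  · -- absolute → maximum property
    intro hab T
    set M : ℝ := Finset.univ.sup' ⟨⟨0, hq⟩, Finset.mem_univ _⟩ (fun i => ‖T i‖) with hM
    have hM0 : 0 ≤ M := le_trans (norm_nonneg (T ⟨0, hq⟩))
      (by rw [hM]; exact Finset.le_sup' (fun i => ‖T i‖) (Finset.mem_univ ⟨0, hq⟩))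
    constructor
    · -- upper bound
      rintro c ⟨x, hx, rfl⟩
      have hxpos : 0 < nrm x := aux_nrm_pos hdef hhom htri hx
      rw [div_le_iff₀ hxpos]
      have h1 : nrm (fun i => T i (x i)) ≤ nrm (M • x) := by
        apply aux_mono hhom htri hab
        intro i
        calc ‖T i (x i)‖ ≤ ‖T i‖ * ‖x i‖ := (T i).le_opNorm _
          _ ≤ M * ‖x i‖ := by
              refine mul_le_mul_of_nonneg_right ?_ (norm_nonneg _)
              rw [hM]; exact Finset.le_sup' (fun i => ‖T i‖) (Finset.mem_univ i)
          _ = ‖(M • x) i‖ := by rw [Pi.smul_apply, norm_smul, Real.norm_eq_abs,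
              abs_of_nonneg hM0]
      calc nrm (fun i => T i (x i)) ≤ nrm (M • x) := h1
        _ = M * nrm x := by rw [hhom, abs_of_nonneg hM0]
    · -- least upper bound
      intro b hb
      refine le_of_forall_lt fun c hc => ?_
      obtain ⟨j, -, hj⟩ := Finset.exists_mem_eq_sup' (⟨⟨0, hq⟩, Finset.mem_univ _⟩ :
        (Finset.univ : Finset (Fin q)).Nonempty) (fun i => ‖T i‖)
      by_cases hc0 : 0 ≤ c
      · have hcj : c < ‖T j‖ := by rw [← hj]; exact hc
        obtain ⟨u, hu⟩ := (T j).exists_mul_lt_of_lt_opNorm hc0 hcj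
        have hu0 : u ≠ 0 := by
          rintro rfl
          simp at hu
        have hupos : 0 < ‖u‖ := norm_pos_iff.mpr hu0
        set x : ∀ i, X i := Pi.single j u with hxdef
        have hx0 : x ≠ 0 := by
          intro h
          exact hu0 (by simpa [hxdef] using congrFun h j)
        have hxpos : 0 < nrm x := aux_nrm_pos hdef hhom htri hx0
        have key : nrm (fun i => T i (x i)) = (‖T j u‖ / ‖u‖) * nrm x := by
          rw [← abs_of_nonneg (by positivity : (0:ℝ) ≤ ‖T j u‖ / ‖u‖), ← hhom]
          apply hab
          intro i
          by_cases hi : i = j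
          · subst hi
            rw [hxdef]
            simp only [Pi.single_eq_same, Pi.smul_apply, norm_smul, Real.norm_eq_abs]
            rw [abs_of_nonneg (by positivity), div_mul_cancel₀ _ hupos.ne']
          · rw [hxdef]
            simp [Pi.single_eq_of_ne hi]
        have hmem : nrm (fun i => T i (x i)) / nrm x ∈
            {c : ℝ | ∃ x : ∀ i, X i, x ≠ 0 ∧ c = nrm (fun i => T i (x i)) / nrm x} :=
          ⟨x, hx0, rfl⟩
        have hle : nrm (fun i => T i (x i)) / nrm x ≤ b := hb hmem
        have : c < nrm (fun i => T i (x i)) / nrm x := by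
          rw [key, mul_div_assoc, div_self hxpos.ne', mul_one]
          rw [lt_div_iff₀ hupos]
          exact hu
        linarith
      · push_neg at hc0
        obtain ⟨u, hu⟩ := exists_ne (0 : X ⟨0, hq⟩)
        set x : ∀ i, X i := Pi.single ⟨0, hq⟩ u with hxdef
        have hx0 : x ≠ 0 := fun h => hu (by simpa [hxdef] using congrFun h ⟨0, hq⟩)
        have hxpos : 0 < nrm x := aux_nrm_pos hdef hhom htri hx0
        have hle : nrm (fun i => T i (x i)) / nrm x ≤ b :=
          hb ⟨x, hx0, rfl⟩
        have h0 : 0 ≤ nrm (fun i => T i (x i)) / nrm x :=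
          div_nonneg (aux_nrm_nonneg hhom htri _) hxpos.le
        linarith
  · -- maximum property → absolute
    intro hmax
    have claim : ∀ x y : ∀ i, X i, (∀ i, ‖x i‖ = ‖y i‖) → nrm y ≤ nrm x := by
      intro x y h
      by_cases hx : x = 0
      · have hy : y = 0 := funext fun i => by
          have : ‖y i‖ = 0 := by rw [← h i, hx]; simp
          simpa using this
        rw [hx, hy]
      · have hxpos : 0 < nrm x := aux_nrm_pos hdef hhom htri hx
        have hT : ∀ i, ∃ Ti : X i →L[ℝ] X i, ‖Ti‖ = 1 ∧ Ti (x i) = y i := by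
          intro i
          by_cases h0 : x i = 0
          · refine ⟨ContinuousLinearMap.id ℝ (X i), ContinuousLinearMap.norm_id, ?_⟩
            have : ‖y i‖ = 0 := by rw [← h i, h0, norm_zero]
            rw [norm_eq_zero] at this
            simp [h0, this]
          · obtain ⟨f, hf1, hfx⟩ := exists_dual_vector ℝ (x i) (norm_ne_zero_iff.mpr h0)
            have hxn : ‖x i‖ ≠ 0 := norm_ne_zero_iff.mpr h0
            refine ⟨f.smulRight (‖x i‖⁻¹ • y i), ?_, ?_⟩
            · rw [ContinuousLinearMap.norm_smulRight_apply, hf1, one_mul, norm_smul,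
                Real.norm_eq_abs, abs_of_nonneg (by positivity), ← h i,
                inv_mul_cancel₀ hxn]
            · have h1 : f (x i) = ‖x i‖ := by exact_mod_cast hfx
              rw [ContinuousLinearMap.smulRight_apply, h1, smul_smul,
                mul_inv_cancel₀ hxn, one_smul]
        choose T hT1 hTx using hT
        have hsup : Finset.univ.sup' (⟨⟨0, hq⟩, Finset.mem_univ _⟩ :
            (Finset.univ : Finset (Fin q)).Nonempty) (fun i => ‖T i‖) = 1 := by
          rw [show (fun i => ‖T i‖) = fun _ => (1:ℝ) from funext hT1]
          exact Finset.sup'_const _ 1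
        have hlub := hmax T
        rw [hsup] at hlub
        have hmem : nrm (fun i => T i (x i)) / nrm x ∈
            {c : ℝ | ∃ x' : ∀ i, X i, x' ≠ 0 ∧ c = nrm (fun i => T i (x' i)) / nrm x'} :=
          ⟨x, hx, rfl⟩
        have hle : nrm (fun i => T i (x i)) / nrm x ≤ 1 := hlub.1 hmem
        rw [show (fun i => T i (x i)) = y from funext hTx] at hle
        rw [div_le_one hxpos] at hle
        exact hle
    intro x y h
    exact le_antisymm (claim y x fun i => (h i).symm) (claim x y h)
end

section
/- Let E be a normed space, L ≥ 1 an integer, and for each layer ℓ = 1,…,L let σ_ℓ : E → E be Lipschitz with constant C_ℓ and σ_ℓ(0) = 0, and let A_ℓ, Ã_ℓ : E → E be bounded linear operators with ‖A_ℓ‖ ≤ B_ℓ, ‖Ã_ℓ‖ ≤ B_ℓ, and ‖A_ℓ − Ã_ℓ‖ ≤ Δ_ℓ. Given an input x ∈ E, define recursively x_0 = x̃_0 = x, x_ℓ = σ_ℓ(A_ℓ x_{ℓ−1}) and x̃_ℓ = σ_ℓ(Ã_ℓ x̃_{ℓ−1}). Then ‖x_L − x̃_L‖ ≤ (∑_{ℓ=1}^L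 Δ_ℓ (∏_{r=ℓ}^L C_r)(∏_{r=ℓ+1}^L B_r)(∏_{r=1}^{ℓ−1} C_r B_r)) ‖x‖. -/
open Finset in
/-- **Multi-layer stability of algebraic neural networks (single feature).**
Each layer applies a bounded linear filter (`A ℓ`, perturbed `A' ℓ`, with
`‖A ℓ‖, ‖A' ℓ‖ ≤ B ℓ` and `‖A ℓ - A' ℓ‖ ≤ Δ ℓ`) followed by a `C ℓ`-Lipschitz
nonlinearity `σ ℓ` vanishing at `0`.  Then the outputs after `L` layers satisfy
`‖x_L − x̃_L‖ ≤ (∑_{ℓ=1}^L Δ_ℓ (∏_{r=ℓ}^L C_r)(∏_{r=ℓ+1}^L B_r)(∏_{r=1}^{ℓ−1} C_r B_r)) ‖x‖`. -/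
theorem algNN_stability_single_feature
    {E : Type*} [NormedAddCommGroup E] [NormedSpace ℝ E]
    (L : ℕ) (hL : 1 ≤ L)
    (σ : ℕ → E → E) (A A' : ℕ → E →L[ℝ] E) (C B Δ : ℕ → ℝ)
    (hC : ∀ ℓ ∈ Icc 1 L, 0 ≤ C ℓ)
    (hσ : ∀ ℓ ∈ Icc 1 L, ∀ a b : E, ‖σ ℓ a - σ ℓ b‖ ≤ C ℓ * ‖a - b‖)
    (hσ0 : ∀ ℓ ∈ Icc 1 L, σ ℓ 0 = 0)
    (hA : ∀ ℓ ∈ Icc 1 L, ‖A ℓ‖ ≤ B ℓ)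
    (hA' : ∀ ℓ ∈ Icc 1 L, ‖A' ℓ‖ ≤ B ℓ)
    (hΔ : ∀ ℓ ∈ Icc 1 L, ‖A ℓ - A' ℓ‖ ≤ Δ ℓ)
    (x : E) (xs ys : ℕ → E)
    (hx0 : xs 0 = x) (hy0 : ys 0 = x)
    (hxs : ∀ ℓ < L, xs (ℓ + 1) = σ (ℓ + 1) (A (ℓ + 1) (xs ℓ)))
    (hys : ∀ ℓ < L, ys (ℓ + 1) = σ (ℓ + 1) (A' (ℓ + 1) (ys ℓ))) :
    ‖xs L - ys L‖ ≤
      (∑ ℓ ∈ Icc 1 L, Δ ℓ * (∏ r ∈ Icc ℓ L, C r) * (∏ r ∈ Icc (ℓ + 1) L, B r)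
        * (∏ r ∈ Icc 1 (ℓ - 1), C r * B r)) * ‖x‖ := by
  have hB : ∀ ℓ ∈ Icc 1 L, 0 ≤ B ℓ := fun ℓ hℓ => le_trans (norm_nonneg _) (hA ℓ hℓ)
  -- bound on ‖ys n‖
  have hyn : ∀ n, n ≤ L → ‖ys n‖ ≤ (∏ r ∈ Icc 1 n, C r * B r) * ‖x‖ := by
    intro n
    induction n with
    | zero => intro _; simp [hy0]
    | succ n ih =>
      intro hn
      have hn' : n ≤ L := by omega
      have hmem : n + 1 ∈ Icc 1 L := by simp [Finset.mem_Icc]; omega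
      have h1 : ys (n + 1) = σ (n + 1) (A' (n + 1) (ys n)) := hys n (by omega)
      have h2 : ‖ys (n + 1)‖ ≤ C (n + 1) * ‖A' (n + 1) (ys n)‖ := by
        have := hσ (n + 1) hmem (A' (n + 1) (ys n)) 0
        rw [hσ0 (n + 1) hmem] at this
        simpa [h1] using this
      have h3 : ‖A' (n + 1) (ys n)‖ ≤ B (n + 1) * ‖ys n‖ := by
        calc ‖A' (n + 1) (ys n)‖ ≤ ‖A' (n + 1)‖ * ‖ys n‖ := (A' (n + 1)).le_opNorm _
          _ ≤ B (n + 1) * ‖ys n‖ :=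
            mul_le_mul_of_nonneg_right (hA' (n + 1) hmem) (norm_nonneg _)
      rw [Finset.prod_Icc_succ_top (by omega : 1 ≤ n + 1)]
      have hCn := hC (n + 1) hmem
      have hBn := hB (n + 1) hmem
      calc ‖ys (n + 1)‖ ≤ C (n + 1) * (B (n + 1) * ‖ys n‖) :=
            h2.trans (mul_le_mul_of_nonneg_left h3 hCn)
        _ ≤ C (n + 1) * (B (n + 1) * ((∏ r ∈ Icc 1 n, C r * B r) * ‖x‖)) := by
            have := ih hn'
            nlinarith [mul_nonneg hCn hBn, norm_nonneg (ys n)]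
        _ = (∏ x ∈ Icc 1 n, C x * B x) * (C (n + 1) * B (n + 1)) * ‖x‖ := by ring
  -- main induction
  have main : ∀ n, n ≤ L → ‖xs n - ys n‖ ≤
      (∑ ℓ ∈ Icc 1 n, Δ ℓ * (∏ r ∈ Icc ℓ n, C r) * (∏ r ∈ Icc (ℓ + 1) n, B r)
        * (∏ r ∈ Icc 1 (ℓ - 1), C r * B r)) * ‖x‖ := by
    intro n
    induction n with
    | zero => intro _; simp [hx0, hy0]
    | succ n ih =>
      intro hn
      have hn' : n ≤ L := by omega
      have hmem : n + 1 ∈ Icc 1 L := by simp [Finset.mem_Icc]; omega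
      have hCn := hC (n + 1) hmem
      have hBn := hB (n + 1) hmem
      have hΔn : (0:ℝ) ≤ Δ (n + 1) := le_trans (norm_nonneg _) (hΔ (n + 1) hmem)
      have h1 : xs (n + 1) = σ (n + 1) (A (n + 1) (xs n)) := hxs n (by omega)
      have h2 : ys (n + 1) = σ (n + 1) (A' (n + 1) (ys n)) := hys n (by omega)
      have hstep : ‖xs (n + 1) - ys (n + 1)‖ ≤
          C (n + 1) * (B (n + 1) * ‖xs n - ys n‖ + Δ (n + 1) * ‖ys n‖) := by
        have hlip := hσ (n + 1) hmem (A (n + 1) (xs n)) (A' (n + 1) (ys n))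
        rw [← h1, ← h2] at hlip
        refine hlip.trans (mul_le_mul_of_nonneg_left ?_ hCn)
        have key : A (n + 1) (xs n) - A' (n + 1) (ys n)
            = A (n + 1) (xs n - ys n) + (A (n + 1) - A' (n + 1)) (ys n) := by
          simp [map_sub, ContinuousLinearMap.sub_apply]; try abel
        rw [key]
        calc ‖A (n + 1) (xs n - ys n) + (A (n + 1) - A' (n + 1)) (ys n)‖
            ≤ ‖A (n + 1) (xs n - ys n)‖ + ‖(A (n + 1) - A' (n + 1)) (ys n)‖ :=
              norm_add_le _ _
          _ ≤ ‖A (n + 1)‖ * ‖xs n - ys n‖ + ‖A (n + 1) - A' (n + 1)‖ * ‖ys n‖ :=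
              add_le_add ((A (n + 1)).le_opNorm _) ((A (n + 1) - A' (n + 1)).le_opNorm _)
          _ ≤ B (n + 1) * ‖xs n - ys n‖ + Δ (n + 1) * ‖ys n‖ :=
              add_le_add (mul_le_mul_of_nonneg_right (hA (n + 1) hmem) (norm_nonneg _))
                (mul_le_mul_of_nonneg_right (hΔ (n + 1) hmem) (norm_nonneg _))
      -- rewrite RHS sum
      have hsum : (∑ ℓ ∈ Icc 1 (n + 1), Δ ℓ * (∏ r ∈ Icc ℓ (n + 1), C r)
            * (∏ r ∈ Icc (ℓ + 1) (n + 1), B r) * (∏ r ∈ Icc 1 (ℓ - 1), C r * B r))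
          = C (n + 1) * B (n + 1) *
            (∑ ℓ ∈ Icc 1 n, Δ ℓ * (∏ r ∈ Icc ℓ n, C r) * (∏ r ∈ Icc (ℓ + 1) n, B r)
              * (∏ r ∈ Icc 1 (ℓ - 1), C r * B r))
            + C (n + 1) * Δ (n + 1) * (∏ r ∈ Icc 1 n, C r * B r) := by
        rw [Finset.sum_Icc_succ_top (by omega : 1 ≤ n + 1), Finset.mul_sum]
        congr 1
        · refine Finset.sum_congr rfl fun ℓ hℓ => ?_
          rw [Finset.mem_Icc] at hℓ
          rw [Finset.prod_Icc_succ_top (by omega : ℓ ≤ n + 1),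
            Finset.prod_Icc_succ_top (by omega : ℓ + 1 ≤ n + 1)]
          ring
        · have : Icc (n + 1 + 1) (n + 1) = ∅ := by
            rw [Finset.Icc_eq_empty_iff]; omega
          rw [this, Finset.Icc_self, Finset.prod_singleton, Finset.prod_empty,
            Nat.add_sub_cancel]
          ring
      rw [hsum, add_mul]
      have hterm1 : C (n + 1) * (B (n + 1) * ‖xs n - ys n‖) ≤
          C (n + 1) * B (n + 1) *
            ((∑ ℓ ∈ Icc 1 n, Δ ℓ * (∏ r ∈ Icc ℓ n, C r) * (∏ r ∈ Icc (ℓ + 1) n, B r)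
              * (∏ r ∈ Icc 1 (ℓ - 1), C r * B r)) * ‖x‖) := by
        have := ih hn'
        nlinarith [mul_nonneg hCn hBn, norm_nonneg (xs n - ys n)]
      have hterm2 : C (n + 1) * (Δ (n + 1) * ‖ys n‖) ≤
          C (n + 1) * Δ (n + 1) * ((∏ r ∈ Icc 1 n, C r * B r) * ‖x‖) := by
        have := hyn n hn'
        nlinarith [mul_nonneg hCn hΔn, norm_nonneg (ys n)]
      calc ‖xs (n + 1) - ys (n + 1)‖
          ≤ C (n + 1) * (B (n + 1) * ‖xs n - ys n‖ + Δ (n + 1) * ‖ys n‖) := hstep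
        _ = C (n + 1) * (B (n + 1) * ‖xs n - ys n‖) + C (n + 1) * (Δ (n + 1) * ‖ys n‖) := by
            ring
        _ ≤ _ := by
            refine add_le_add (hterm1.trans (le_of_eq (by ring))) (hterm2.trans (le_of_eq (by ring)))
  exact main L le_rfl
end

section
/- Let E be a normed space, L ≥ 1 an integer, F_0 = 1 and F_1,…,F_L positive integers (feature counts). For each layer ℓ = 1,…,L let σ_ℓ : E → E be Lipschitz with constant C_ℓ and σ_ℓ(0) = 0, and let A_ℓ^{fg}, Ã_ℓ^{fg} : E → E (for 1 ≤ f ≤ F_ℓ, 1 ≤ g ≤ F_{ℓ−1}) be bounded linear operators with ‖A_ℓ^{fg}‖ ≤ B_ℓ, ‖Ã_ℓ^{fg}‖ ≤ B_ℓ, and ‖A_ℓ^{fg} − Ã_ℓ^{fg}‖ ≤ Δ_ℓ for all f, g. Given an input x ∈ E, define x_0^1 = x̃_0^1 = x and recursively x_ℓ^f = σ_ℓ(∑_{g=1}^{F_{ℓ−1}} A_ℓ^{fg} x_{ℓ−1}^g) and x̃_ℓ^f = σ_ℓ(∑_{g=1}^{F_{ℓ−1}} Ã_ℓ^{fg} x̃_{ℓ−1}^g).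 Then each output feature satisfies ‖x_L^f − x̃_L^f‖ ≤ (∑_{ℓ=1}^L Δ_ℓ (∏_{r=ℓ}^L C_r)(∏_{r=ℓ+1}^L B_r)(∏_{r=ℓ}^{L−1} F_r)(∏_{r=1}^{ℓ−1} C_r F_r B_r)) ‖x‖. -/
open Finset in
/-- **Per-feature stability of deep algebraic neural networks with multiple
features.**  Layer `ℓ` maps the `F (ℓ-1)` input features to `F ℓ` output
features; each output feature is the `C ℓ`-Lipschitz nonlinearity `σ ℓ`
(vanishing at `0`) applied to a sum over input features of filtered signals,
with filters `A ℓ f g` (perturbed `A' ℓ f g`) satisfying `‖A ℓ f g‖ ≤ B ℓ`,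
`‖A' ℓ f g‖ ≤ B ℓ` and `‖A ℓ f g - A' ℓ f g‖ ≤ Δ ℓ`.  Then every output
feature `f` of layer `L` satisfies the stated stability bound. -/
theorem algNN_stability_per_feature
    {E : Type*} [NormedAddCommGroup E] [NormedSpace ℝ E]
    (L : ℕ) (hL : 1 ≤ L)
    (F : ℕ → ℕ) (hF0 : F 0 = 1) (hFpos : ∀ ℓ ∈ Icc 1 L, 0 < F ℓ)
    (σ : ℕ → E → E) (A A' : ℕ → ℕ → ℕ → E →L[ℝ] E) (C B Δ : ℕ → ℝ)
    (hC : ∀ ℓ ∈ Icc 1 L, 0 ≤ C ℓ)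
    (hσ : ∀ ℓ ∈ Icc 1 L, ∀ a b : E, ‖σ ℓ a - σ ℓ b‖ ≤ C ℓ * ‖a - b‖)
    (hσ0 : ∀ ℓ ∈ Icc 1 L, σ ℓ 0 = 0)
    (hA : ∀ ℓ ∈ Icc 1 L, ∀ f ∈ Icc 1 (F ℓ), ∀ g ∈ Icc 1 (F (ℓ - 1)),
      ‖A ℓ f g‖ ≤ B ℓ)
    (hA' : ∀ ℓ ∈ Icc 1 L, ∀ f ∈ Icc 1 (F ℓ), ∀ g ∈ Icc 1 (F (ℓ - 1)),
      ‖A' ℓ f g‖ ≤ B ℓ)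
    (hΔ : ∀ ℓ ∈ Icc 1 L, ∀ f ∈ Icc 1 (F ℓ), ∀ g ∈ Icc 1 (F (ℓ - 1)),
      ‖A ℓ f g - A' ℓ f g‖ ≤ Δ ℓ)
    (x : E) (xs ys : ℕ → ℕ → E)
    (hx0 : xs 0 1 = x) (hy0 : ys 0 1 = x)
    (hxs : ∀ ℓ < L, ∀ f ∈ Icc 1 (F (ℓ + 1)),
      xs (ℓ + 1) f = σ (ℓ + 1) (∑ g ∈ Icc 1 (F ℓ), A (ℓ + 1) f g (xs ℓ g)))
    (hys : ∀ ℓ < L, ∀ f ∈ Icc 1 (F (ℓ + 1)),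
      ys (ℓ + 1) f = σ (ℓ + 1) (∑ g ∈ Icc 1 (F ℓ), A' (ℓ + 1) f g (ys ℓ g))) :
    ∀ f ∈ Icc 1 (F L),
      ‖xs L f - ys L f‖ ≤
        (∑ ℓ ∈ Icc 1 L, Δ ℓ * (∏ r ∈ Icc ℓ L, C r) * (∏ r ∈ Icc (ℓ + 1) L, B r)
          * (∏ r ∈ Icc ℓ (L - 1), (F r : ℝ))
          * (∏ r ∈ Icc 1 (ℓ - 1), C r * (F r : ℝ) * B r)) * ‖x‖ := by

  -- basic facts
  have hF1 : ∀ ℓ, ℓ ≤ L → 1 ≤ F ℓ := by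
    intro ℓ hℓ
    rcases Nat.eq_zero_or_pos ℓ with h | h
    · simp [h, hF0]
    · exact hFpos ℓ (mem_Icc.mpr ⟨h, hℓ⟩)
  have hmem1 : ∀ ℓ ∈ Icc 1 L, (1 : ℕ) ∈ Icc 1 (F ℓ) := fun ℓ hℓ =>
    mem_Icc.mpr ⟨le_refl 1, hF1 ℓ (mem_Icc.mp hℓ).2⟩
  have hmem1' : ∀ ℓ ∈ Icc 1 L, (1 : ℕ) ∈ Icc 1 (F (ℓ - 1)) := fun ℓ hℓ =>
    mem_Icc.mpr ⟨le_refl 1, hF1 _ (le_trans (Nat.sub_le ℓ 1) (mem_Icc.mp hℓ).2)⟩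
  have hB0 : ∀ ℓ ∈ Icc 1 L, 0 ≤ B ℓ := fun ℓ hℓ =>
    le_trans (norm_nonneg _) (hA ℓ hℓ 1 (hmem1 ℓ hℓ) 1 (hmem1' ℓ hℓ))
  have hΔ0 : ∀ ℓ ∈ Icc 1 L, 0 ≤ Δ ℓ := fun ℓ hℓ =>
    le_trans (norm_nonneg _) (hΔ ℓ hℓ 1 (hmem1 ℓ hℓ) 1 (hmem1' ℓ hℓ))
  have prodCFB : ∀ m : ℕ, (∏ r ∈ Icc 1 m, C r * (F r : ℝ) * B r)
      = (∏ r ∈ Icc 1 m, C r * B r) * ∏ r ∈ Icc 1 m, (F r : ℝ) := by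
    intro m
    rw [← prod_mul_distrib]
    exact prod_congr rfl fun r _ => by ring
  have prodF : ∀ m : ℕ, m ≤ L → (∏ r ∈ Icc 1 m, (F r : ℝ))
      = (∏ r ∈ Icc 1 (m - 1), (F r : ℝ)) * (F m : ℝ) := by
    intro m _
    cases m with
    | zero => simp [hF0]
    | succ k =>
        rw [Nat.succ_sub_one, Finset.prod_Icc_succ_top (Nat.succ_le_succ (Nat.zero_le k))]
  set Pb : ℕ → ℝ := fun m => (∏ r ∈ Icc 1 m, C r * B r) * ∏ r ∈ Icc 1 (m - 1), (F r : ℝ)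
    with hPb
  set Tb : ℕ → ℝ := fun m => ∑ ℓ ∈ Icc 1 m, Δ ℓ * (∏ r ∈ Icc ℓ m, C r)
      * (∏ r ∈ Icc (ℓ + 1) m, B r) * (∏ r ∈ Icc ℓ (m - 1), (F r : ℝ))
      * (∏ r ∈ Icc 1 (ℓ - 1), C r * (F r : ℝ) * B r) with hTb
  have Pb0 : Pb 0 = 1 := by simp [hPb]
  have Tb0 : Tb 0 = 0 := by simp [hTb]
  have Pbrec : ∀ n : ℕ, n ≤ L → Pb (n + 1) = C (n + 1) * ((F n : ℝ) * (B (n + 1) * Pb n)) := by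
    intro n hn
    simp only [hPb, Nat.add_sub_cancel]
    rw [Finset.prod_Icc_succ_top (Nat.succ_le_succ (Nat.zero_le n)), prodF n hn]
    ring
  have Tbrec : ∀ n : ℕ, n < L →
      Tb (n + 1) = C (n + 1) * ((F n : ℝ) * (Δ (n + 1) * Pb n + B (n + 1) * Tb n)) := by
    intro n hn
    simp only [hTb, hPb, Nat.add_sub_cancel]
    have hsum : (∑ ℓ ∈ Icc 1 n, Δ ℓ * (∏ r ∈ Icc ℓ (n + 1), C r)
          * (∏ r ∈ Icc (ℓ + 1) (n + 1), B r) * (∏ r ∈ Icc ℓ n, (F r : ℝ))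
          * (∏ r ∈ Icc 1 (ℓ - 1), C r * (F r : ℝ) * B r))
        = C (n + 1) * ((F n : ℝ) * (B (n + 1) * ∑ ℓ ∈ Icc 1 n, Δ ℓ * (∏ r ∈ Icc ℓ n, C r)
          * (∏ r ∈ Icc (ℓ + 1) n, B r) * (∏ r ∈ Icc ℓ (n - 1), (F r : ℝ))
          * (∏ r ∈ Icc 1 (ℓ - 1), C r * (F r : ℝ) * B r))) := by
      rw [Finset.mul_sum, Finset.mul_sum, Finset.mul_sum]
      refine sum_congr rfl fun k hk => ?_
      obtain ⟨hk1, hk2⟩ := mem_Icc.mp hk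
      obtain ⟨m, rfl⟩ : ∃ m, n = m + 1 := ⟨n - 1, by omega⟩
      simp only [Nat.add_sub_cancel]
      rw [Finset.prod_Icc_succ_top (show k ≤ m + 1 + 1 by omega) C,
        Finset.prod_Icc_succ_top (show k + 1 ≤ m + 1 + 1 by omega) B,
        Finset.prod_Icc_succ_top (show k ≤ m + 1 by omega) (fun r => (F r : ℝ))]
      ring
    rw [Finset.sum_Icc_succ_top (Nat.succ_le_succ (Nat.zero_le n)), hsum, Icc_self,
      prod_singleton, Finset.Icc_eq_empty (show ¬ n + 1 + 1 ≤ n + 1 by omega),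
      Finset.Icc_eq_empty (show ¬ n + 1 ≤ n by omega), prod_empty, prod_empty,
      Nat.add_sub_cancel, prodCFB n, prodF n (le_of_lt hn)]
    ring
  have key : ∀ m, m ≤ L → ∀ f ∈ Icc 1 (F m),
      ‖ys m f‖ ≤ Pb m * ‖x‖ ∧ ‖xs m f - ys m f‖ ≤ Tb m * ‖x‖ := by
    intro m
    induction m with
    | zero =>
        intro _ f hf
        rw [hF0] at hf
        have hf1 : f = 1 := le_antisymm (mem_Icc.mp hf).2 (mem_Icc.mp hf).1
        subst hf1
        refine ⟨?_, ?_⟩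
        · rw [hy0, Pb0, one_mul]
        · rw [hx0, hy0, sub_self, norm_zero, Tb0, zero_mul]
    | succ n ih =>
        intro hn f hf
        have hnL : n ≤ L := Nat.le_of_succ_le hn
        have hmemL : n + 1 ∈ Icc 1 L := mem_Icc.mpr ⟨Nat.succ_le_succ (Nat.zero_le n), hn⟩
        have hC1 : 0 ≤ C (n + 1) := hC _ hmemL
        have hB1 : 0 ≤ B (n + 1) := hB0 _ hmemL
        have hD1 : 0 ≤ Δ (n + 1) := hΔ0 _ hmemL
        have hcard : (Icc 1 (F n)).card = F n := by rw [Nat.card_Icc]; omega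
        have hg' : ∀ g ∈ Icc 1 (F n), g ∈ Icc 1 (F (n + 1 - 1)) := fun g hg => by
          simpa using hg
        constructor
        · rw [hys n hn f hf]
          have hlip := hσ (n + 1) hmemL (∑ g ∈ Icc 1 (F n), A' (n + 1) f g (ys n g)) 0
          rw [hσ0 (n + 1) hmemL, sub_zero, sub_zero] at hlip
          refine le_trans hlip ?_
          have h1 : ‖∑ g ∈ Icc 1 (F n), A' (n + 1) f g (ys n g)‖
              ≤ (F n : ℝ) * (B (n + 1) * (Pb n * ‖x‖)) := by
            refine le_trans (norm_sum_le _ _) ?_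
            have h2 : ∀ g ∈ Icc 1 (F n),
                ‖A' (n + 1) f g (ys n g)‖ ≤ B (n + 1) * (Pb n * ‖x‖) := by
              intro g hg
              refine le_trans ((A' (n + 1) f g).le_opNorm _) ?_
              exact mul_le_mul (hA' (n + 1) hmemL f hf g (hg' g hg)) ((ih hnL g hg).1)
                (norm_nonneg _) hB1
            refine le_trans (Finset.sum_le_sum h2) ?_
            rw [Finset.sum_const, hcard, nsmul_eq_mul]
          refine le_trans (mul_le_mul_of_nonneg_left h1 hC1) (le_of_eq ?_)
          rw [Pbrec n hnL]
          ring
        · rw [hxs n hn f hf, hys n hn f hf]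
          refine le_trans (hσ (n + 1) hmemL _ _) ?_
          rw [← Finset.sum_sub_distrib]
          have h1 : ‖∑ g ∈ Icc 1 (F n), (A (n + 1) f g (xs n g) - A' (n + 1) f g (ys n g))‖
              ≤ (F n : ℝ) * (Δ (n + 1) * (Pb n * ‖x‖) + B (n + 1) * (Tb n * ‖x‖)) := by
            refine le_trans (norm_sum_le _ _) ?_
            have h2 : ∀ g ∈ Icc 1 (F n),
                ‖A (n + 1) f g (xs n g) - A' (n + 1) f g (ys n g)‖
                  ≤ Δ (n + 1) * (Pb n * ‖x‖) + B (n + 1) * (Tb n * ‖x‖) := by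
              intro g hg
              have hrw : A (n + 1) f g (xs n g) - A' (n + 1) f g (ys n g)
                  = (A (n + 1) f g - A' (n + 1) f g) (ys n g)
                    + A (n + 1) f g (xs n g - ys n g) := by
                simp only [ContinuousLinearMap.sub_apply, map_sub]
                abel
              rw [hrw]
              refine le_trans (norm_add_le _ _) (add_le_add ?_ ?_)
              · refine le_trans ((A (n + 1) f g - A' (n + 1) f g).le_opNorm _) ?_
                exact mul_le_mul (hΔ (n + 1) hmemL f hf g (hg' g hg)) ((ih hnL g hg).1)
                  (norm_nonneg _) hD1
              · refine le_trans ((A (n + 1) f g).le_opNorm _) ?_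
                exact mul_le_mul (hA (n + 1) hmemL f hf g (hg' g hg)) ((ih hnL g hg).2)
                  (norm_nonneg _) hB1
            refine le_trans (Finset.sum_le_sum h2) ?_
            rw [Finset.sum_const, hcard, nsmul_eq_mul]
          refine le_trans (mul_le_mul_of_nonneg_left h1 hC1) (le_of_eq ?_)
          rw [Tbrec n hn]
          ring
  intro f hf
  have hfin := (key L le_rfl f hf).2
  rw [hTb] at hfin
  simpa using hfin
end

section
/- Let E be a normed space, L ≥ 1 an integer, F_0 = 1 and F_1,…,F_L positive integers. For each layer ℓ = 1,…,L let σ_ℓ : E → E be Lipschitz with constant C_ℓ and σ_ℓ(0) = 0, and let A_ℓ^{fg}, Ã_ℓ^{fg} : E → E (for 1 ≤ f ≤ F_ℓ, 1 ≤ g ≤ F_{ℓ−1}) be bounded linear operators with ‖A_ℓ^{fg}‖ ≤ B_ℓ, ‖Ã_ℓ^{fg}‖ ≤ B_ℓ, and ‖A_ℓ^{fg} − Ã_ℓ^{fg}‖ ≤ Δ_ℓ for all f, g. Given an input x ∈ E, define x_0^1 = x̃_0^1 = x and recursively x_ℓ^f = σ_ℓ(∑_{g=1}^{F_{ℓ−1}}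 A_ℓ^{fg} x_{ℓ−1}^g) and x̃_ℓ^f = σ_ℓ(∑_{g=1}^{F_{ℓ−1}} Ã_ℓ^{fg} x̃_{ℓ−1}^g). Then the network outputs satisfy (∑_{f=1}^{F_L} ‖x_L^f − x̃_L^f‖²)^{1/2} ≤ √(F_L) · (∑_{ℓ=1}^L Δ_ℓ (∏_{r=ℓ}^L C_r)(∏_{r=ℓ+1}^L B_r)(∏_{r=ℓ}^{L−1} F_r)(∏_{r=1}^{ℓ−1} C_r F_r B_r)) ‖x‖. -/
open Finset in
/-- Shifting the index in a product over a `Finset.Icc` of naturals. -/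
lemma algNN_prod_Icc_shift (g : ℕ → ℝ) (a b : ℕ) :
    ∏ r ∈ Icc (a + 1) (b + 1), g (r - 1) = ∏ r ∈ Icc a b, g r := by
  rw [← Finset.map_add_right_Icc a b 1, Finset.prod_map]
  simp

open Finset in
/-- Peeling off the bottom element of a product over `Finset.Icc`. -/
lemma algNN_prod_Icc_bot (f : ℕ → ℝ) (a b : ℕ) (h : a ≤ b) :
    ∏ r ∈ Icc a b, f r = f a * ∏ r ∈ Icc (a + 1) b, f r := by
  rw [Finset.Icc_add_one_left_eq_Ioc, ← Finset.Ioc_insert_left h, prod_insert (by simp)]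

open Finset in
/-- **Per-feature stability of deep algebraic neural networks with multiple
features.**  Layer `ℓ` maps the `F (ℓ-1)` input features to `F ℓ` output
features; each output feature is the `C ℓ`-Lipschitz nonlinearity `σ ℓ`
(vanishing at `0`) applied to a sum over input features of filtered signals,
with filters `A ℓ f g` (perturbed `A' ℓ f g`) satisfying `‖A ℓ f g‖ ≤ B ℓ`,
`‖A' ℓ f g‖ ≤ B ℓ` and `‖A ℓ f g - A' ℓ f g‖ ≤ Δ ℓ`.  Then the distance
between the tuples of `F L` output features of the network and of its perturbed
version, measured in the ℓ²-norm over features, satisfies the stated bound. -/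
theorem algNN_stability_deep
    {E : Type*} [NormedAddCommGroup E] [NormedSpace ℝ E]
    (L : ℕ) (hL : 1 ≤ L)
    (F : ℕ → ℕ) (hF0 : F 0 = 1) (hFpos : ∀ ℓ ∈ Icc 1 L, 0 < F ℓ)
    (σ : ℕ → E → E) (A A' : ℕ → ℕ → ℕ → E →L[ℝ] E) (C B Δ : ℕ → ℝ)
    (hC : ∀ ℓ ∈ Icc 1 L, 0 ≤ C ℓ)
    (hσ : ∀ ℓ ∈ Icc 1 L, ∀ a b : E, ‖σ ℓ a - σ ℓ b‖ ≤ C ℓ * ‖a - b‖)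
    (hσ0 : ∀ ℓ ∈ Icc 1 L, σ ℓ 0 = 0)
    (hA : ∀ ℓ ∈ Icc 1 L, ∀ f ∈ Icc 1 (F ℓ), ∀ g ∈ Icc 1 (F (ℓ - 1)),
      ‖A ℓ f g‖ ≤ B ℓ)
    (hA' : ∀ ℓ ∈ Icc 1 L, ∀ f ∈ Icc 1 (F ℓ), ∀ g ∈ Icc 1 (F (ℓ - 1)),
      ‖A' ℓ f g‖ ≤ B ℓ)
    (hΔ : ∀ ℓ ∈ Icc 1 L, ∀ f ∈ Icc 1 (F ℓ), ∀ g ∈ Icc 1 (F (ℓ - 1)),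
      ‖A ℓ f g - A' ℓ f g‖ ≤ Δ ℓ)
    (x : E) (xs ys : ℕ → ℕ → E)
    (hx0 : xs 0 1 = x) (hy0 : ys 0 1 = x)
    (hxs : ∀ ℓ < L, ∀ f ∈ Icc 1 (F (ℓ + 1)),
      xs (ℓ + 1) f = σ (ℓ + 1) (∑ g ∈ Icc 1 (F ℓ), A (ℓ + 1) f g (xs ℓ g)))
    (hys : ∀ ℓ < L, ∀ f ∈ Icc 1 (F (ℓ + 1)),
      ys (ℓ + 1) f = σ (ℓ + 1) (∑ g ∈ Icc 1 (F ℓ), A' (ℓ + 1) f g (ys ℓ g))) :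
    Real.sqrt (∑ f ∈ Icc 1 (F L), ‖xs L f - ys L f‖ ^ 2) ≤
      Real.sqrt (F L) *
        (∑ ℓ ∈ Icc 1 L, Δ ℓ * (∏ r ∈ Icc ℓ L, C r) * (∏ r ∈ Icc (ℓ + 1) L, B r)
          * (∏ r ∈ Icc ℓ (L - 1), (F r : ℝ))
          * (∏ r ∈ Icc 1 (ℓ - 1), C r * (F r : ℝ) * B r)) * ‖x‖ := by
  -- basic positivity facts
  have hFL : 0 < F L := hFpos L (mem_Icc.2 ⟨hL, le_rfl⟩)
  have hFpos' : ∀ ℓ ∈ Icc 1 L, 0 < F (ℓ - 1) := by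
    intro ℓ hℓ
    rw [mem_Icc] at hℓ
    rcases Nat.lt_or_ge ℓ 2 with h | h
    · have : ℓ = 1 := by omega
      simp [this, hF0]
    · exact hFpos (ℓ - 1) (mem_Icc.2 ⟨by omega, by omega⟩)
  have hB0 : ∀ ℓ ∈ Icc 1 L, 0 ≤ B ℓ := fun ℓ hℓ =>
    le_trans (norm_nonneg _)
      (hA ℓ hℓ 1 (mem_Icc.2 ⟨le_rfl, hFpos ℓ hℓ⟩) 1 (mem_Icc.2 ⟨le_rfl, hFpos' ℓ hℓ⟩))
  have hΔ0 : ∀ ℓ ∈ Icc 1 L, 0 ≤ Δ ℓ := fun ℓ hℓ =>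
    le_trans (norm_nonneg _)
      (hΔ ℓ hℓ 1 (mem_Icc.2 ⟨le_rfl, hFpos ℓ hℓ⟩) 1 (mem_Icc.2 ⟨le_rfl, hFpos' ℓ hℓ⟩))
  -- products of `C r * B r * F (r-1)` are nonnegative
  have hPnn : ∀ a b : ℕ, 1 ≤ a → b ≤ L →
      0 ≤ ∏ r ∈ Icc a b, C r * B r * (F (r - 1) : ℝ) := by
    intro a b ha hb
    refine prod_nonneg fun r hr => ?_
    rw [mem_Icc] at hr
    have hr' : r ∈ Icc 1 L := mem_Icc.2 ⟨le_trans ha hr.1, le_trans hr.2 hb⟩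
    have := hC r hr'
    have := hB0 r hr'
    positivity
  -- the main simultaneous induction
  have main : ∀ ℓ, ℓ ≤ L → ∀ f ∈ Icc 1 (F ℓ),
      ‖ys ℓ f‖ ≤ (∏ r ∈ Icc 1 ℓ, C r * B r * (F (r - 1) : ℝ)) * ‖x‖ ∧
      ‖xs ℓ f - ys ℓ f‖ ≤
        (∑ j ∈ Icc 1 ℓ, Δ j * C j * (F (j - 1) : ℝ)
            * (∏ r ∈ Icc 1 (j - 1), C r * B r * (F (r - 1) : ℝ))
            * (∏ r ∈ Icc (j + 1) ℓ, C r * B r * (F (r - 1) : ℝ))) * ‖x‖ := by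
    intro ℓ
    induction ℓ with
    | zero =>
      intro _ f hf
      rw [hF0] at hf
      have hf1 : f = 1 := by rw [mem_Icc] at hf; omega
      subst hf1
      refine ⟨by simp [hy0], by simp [hx0, hy0]⟩
    | succ ℓ ih =>
      intro hℓL f hf
      have hℓ : ℓ ≤ L := by omega
      have hmem : ℓ + 1 ∈ Icc 1 L := mem_Icc.2 ⟨by omega, hℓL⟩
      have hC1 : 0 ≤ C (ℓ + 1) := hC _ hmem
      have hB1 : 0 ≤ B (ℓ + 1) := hB0 _ hmem
      have hΔ1 : 0 ≤ Δ (ℓ + 1) := hΔ0 _ hmem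
      have hσ1 := hσ _ hmem
      have hσ01 := hσ0 _ hmem
      set Pl := ∏ r ∈ Icc 1 ℓ, C r * B r * (F (r - 1) : ℝ) with hPl
      set Sml := ∑ j ∈ Icc 1 ℓ, Δ j * C j * (F (j - 1) : ℝ)
          * (∏ r ∈ Icc 1 (j - 1), C r * B r * (F (r - 1) : ℝ))
          * (∏ r ∈ Icc (j + 1) ℓ, C r * B r * (F (r - 1) : ℝ)) with hSml
      have hnorm : ∀ g ∈ Icc 1 (F ℓ), ‖ys ℓ g‖ ≤ Pl * ‖x‖ := fun g hg => (ih hℓ g hg).1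
      have hdiff : ∀ g ∈ Icc 1 (F ℓ), ‖xs ℓ g - ys ℓ g‖ ≤ Sml * ‖x‖ :=
        fun g hg => (ih hℓ g hg).2
      have hfmem : f ∈ Icc 1 (F ((ℓ + 1) - 1 + 1)) := by simpa using hf
      have hgm : ∀ g ∈ Icc 1 (F ℓ), g ∈ Icc 1 (F ((ℓ + 1) - 1)) := by simp
      have hcard : ((Icc 1 (F ℓ)).card : ℝ) = (F ℓ : ℝ) := by
        rw [Nat.card_Icc]; norm_num
      constructor
      · -- norm bound
        rw [hys ℓ (by omega) f hf]
        calc ‖σ (ℓ + 1) (∑ g ∈ Icc 1 (F ℓ), A' (ℓ + 1) f g (ys ℓ g))‖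
            = ‖σ (ℓ + 1) (∑ g ∈ Icc 1 (F ℓ), A' (ℓ + 1) f g (ys ℓ g)) - σ (ℓ + 1) 0‖ := by
              rw [hσ01, sub_zero]
          _ ≤ C (ℓ + 1) * ‖(∑ g ∈ Icc 1 (F ℓ), A' (ℓ + 1) f g (ys ℓ g)) - 0‖ := hσ1 _ _
          _ = C (ℓ + 1) * ‖∑ g ∈ Icc 1 (F ℓ), A' (ℓ + 1) f g (ys ℓ g)‖ := by rw [sub_zero]
          _ ≤ C (ℓ + 1) * ((F ℓ : ℝ) * (B (ℓ + 1) * (Pl * ‖x‖))) := by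
              refine mul_le_mul_of_nonneg_left ?_ hC1
              refine le_trans (norm_sum_le _ _) ?_
              calc ∑ g ∈ Icc 1 (F ℓ), ‖A' (ℓ + 1) f g (ys ℓ g)‖
                  ≤ ∑ g ∈ Icc 1 (F ℓ), B (ℓ + 1) * (Pl * ‖x‖) := by
                    refine sum_le_sum fun g hg => ?_
                    refine le_trans ((A' (ℓ + 1) f g).le_opNorm _) ?_
                    exact mul_le_mul (hA' _ hmem f (by simpa using hf) g (hgm g hg))
                      (hnorm g hg) (norm_nonneg _) hB1
                _ = (F ℓ : ℝ) * (B (ℓ + 1) * (Pl * ‖x‖)) := by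
                    rw [sum_const, nsmul_eq_mul, hcard]
          _ = (∏ r ∈ Icc 1 (ℓ + 1), C r * B r * (F (r - 1) : ℝ)) * ‖x‖ := by
              rw [Finset.prod_Icc_succ_top (by omega : 1 ≤ ℓ + 1), ← hPl]
              simp only [Nat.add_sub_cancel]
              ring
      · -- difference bound
        rw [hxs ℓ (by omega) f hf, hys ℓ (by omega) f hf]
        have hterm : ∀ g ∈ Icc 1 (F ℓ),
            ‖A (ℓ + 1) f g (xs ℓ g) - A' (ℓ + 1) f g (ys ℓ g)‖
              ≤ B (ℓ + 1) * (Sml * ‖x‖) + Δ (ℓ + 1) * (Pl * ‖x‖) := by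
          intro g hg
          have hsplit : A (ℓ + 1) f g (xs ℓ g) - A' (ℓ + 1) f g (ys ℓ g)
              = A (ℓ + 1) f g (xs ℓ g - ys ℓ g)
                + (A (ℓ + 1) f g - A' (ℓ + 1) f g) (ys ℓ g) := by
            simp [map_sub, ContinuousLinearMap.sub_apply]
          rw [hsplit]
          refine le_trans (norm_add_le _ _) (add_le_add ?_ ?_)
          · refine le_trans ((A (ℓ + 1) f g).le_opNorm _) ?_
            exact mul_le_mul (hA _ hmem f (by simpa using hf) g (hgm g hg))
              (hdiff g hg) (norm_nonneg _) hB1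
          · refine le_trans ((A (ℓ + 1) f g - A' (ℓ + 1) f g).le_opNorm _) ?_
            exact mul_le_mul (hΔ _ hmem f (by simpa using hf) g (hgm g hg))
              (hnorm g hg) (norm_nonneg _) hΔ1
        calc ‖σ (ℓ + 1) (∑ g ∈ Icc 1 (F ℓ), A (ℓ + 1) f g (xs ℓ g))
              - σ (ℓ + 1) (∑ g ∈ Icc 1 (F ℓ), A' (ℓ + 1) f g (ys ℓ g))‖
            ≤ C (ℓ + 1) * ‖(∑ g ∈ Icc 1 (F ℓ), A (ℓ + 1) f g (xs ℓ g))
              - ∑ g ∈ Icc 1 (F ℓ), A' (ℓ + 1) f g (ys ℓ g)‖ := hσ1 _ _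
          _ = C (ℓ + 1) * ‖∑ g ∈ Icc 1 (F ℓ),
              (A (ℓ + 1) f g (xs ℓ g) - A' (ℓ + 1) f g (ys ℓ g))‖ := by
              rw [← Finset.sum_sub_distrib]
          _ ≤ C (ℓ + 1) * ((F ℓ : ℝ) *
              (B (ℓ + 1) * (Sml * ‖x‖) + Δ (ℓ + 1) * (Pl * ‖x‖))) := by
              refine mul_le_mul_of_nonneg_left ?_ hC1
              refine le_trans (norm_sum_le _ _) ?_
              calc ∑ g ∈ Icc 1 (F ℓ), ‖A (ℓ + 1) f g (xs ℓ g) - A' (ℓ + 1) f g (ys ℓ g)‖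
                  ≤ ∑ g ∈ Icc 1 (F ℓ),
                      (B (ℓ + 1) * (Sml * ‖x‖) + Δ (ℓ + 1) * (Pl * ‖x‖)) :=
                    sum_le_sum hterm
                _ = (F ℓ : ℝ) * (B (ℓ + 1) * (Sml * ‖x‖) + Δ (ℓ + 1) * (Pl * ‖x‖)) := by
                    rw [sum_const, nsmul_eq_mul, hcard]
          _ = (∑ j ∈ Icc 1 (ℓ + 1), Δ j * C j * (F (j - 1) : ℝ)
                * (∏ r ∈ Icc 1 (j - 1), C r * B r * (F (r - 1) : ℝ))
                * (∏ r ∈ Icc (j + 1) (ℓ + 1), C r * B r * (F (r - 1) : ℝ))) * ‖x‖ := by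
              rw [Finset.sum_Icc_succ_top (by omega : 1 ≤ ℓ + 1)]
              have step : ∀ j ∈ Icc 1 ℓ,
                  Δ j * C j * (F (j - 1) : ℝ)
                    * (∏ r ∈ Icc 1 (j - 1), C r * B r * (F (r - 1) : ℝ))
                    * (∏ r ∈ Icc (j + 1) (ℓ + 1), C r * B r * (F (r - 1) : ℝ))
                  = (C (ℓ + 1) * B (ℓ + 1) * (F ℓ : ℝ)) *
                    (Δ j * C j * (F (j - 1) : ℝ)
                    * (∏ r ∈ Icc 1 (j - 1), C r * B r * (F (r - 1) : ℝ))
                    * (∏ r ∈ Icc (j + 1) ℓ, C r * B r * (F (r - 1) : ℝ))) := by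
                intro j hj
                rw [mem_Icc] at hj
                rw [Finset.prod_Icc_succ_top (by omega : j + 1 ≤ ℓ + 1)]
                simp only [Nat.add_sub_cancel]
                ring
              rw [sum_congr rfl step, ← mul_sum, ← hSml]
              have hempty : Icc (ℓ + 1 + 1) (ℓ + 1) = (∅ : Finset ℕ) :=
                Icc_eq_empty (by omega)
              rw [hempty, prod_empty]
              simp only [Nat.add_sub_cancel, ← hPl]
              ring
  -- extract per-feature bound at the top layer
  have mainL := main L le_rfl
  set Sm := ∑ j ∈ Icc 1 L, Δ j * C j * (F (j - 1) : ℝ)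
      * (∏ r ∈ Icc 1 (j - 1), C r * B r * (F (r - 1) : ℝ))
      * (∏ r ∈ Icc (j + 1) L, C r * B r * (F (r - 1) : ℝ)) with hSm
  have hSnn : 0 ≤ Sm := by
    refine sum_nonneg fun j hj => ?_
    rw [mem_Icc] at hj
    have hj' : j ∈ Icc 1 L := mem_Icc.2 hj
    have h1 := hΔ0 j hj'
    have h2 := hC j hj'
    have h3 := hPnn 1 (j - 1) le_rfl (by omega)
    have h4 := hPnn (j + 1) L (by omega) le_rfl
    positivity
  -- termwise identification with the statement's sum
  have hterm_eq : Sm = ∑ ℓ ∈ Icc 1 L, Δ ℓ * (∏ r ∈ Icc ℓ L, C r)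
      * (∏ r ∈ Icc (ℓ + 1) L, B r) * (∏ r ∈ Icc ℓ (L - 1), (F r : ℝ))
      * (∏ r ∈ Icc 1 (ℓ - 1), C r * (F r : ℝ) * B r) := by
    rw [hSm]
    refine sum_congr rfl fun j hj => ?_
    rw [mem_Icc] at hj
    obtain ⟨hj1, hjL⟩ := hj
    have hsplit : ∀ a b : ℕ, (∏ r ∈ Icc a b, C r * B r * (F (r - 1) : ℝ))
        = (∏ r ∈ Icc a b, C r) * (∏ r ∈ Icc a b, B r)
          * (∏ r ∈ Icc a b, (F (r - 1) : ℝ)) := by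
      intro a b
      rw [prod_mul_distrib, prod_mul_distrib]
    have hCsplit : (∏ r ∈ Icc j L, C r) = C j * ∏ r ∈ Icc (j + 1) L, C r :=
      algNN_prod_Icc_bot C j L hjL
    have hFshift : (∏ r ∈ Icc (j + 1) L, (F (r - 1) : ℝ))
        = ∏ r ∈ Icc j (L - 1), (F r : ℝ) := by
      have h : L - 1 + 1 = L := by omega
      rw [← h]
      exact algNN_prod_Icc_shift (fun r => (F r : ℝ)) j (L - 1)
    have hFj : (F (j - 1) : ℝ) * (∏ r ∈ Icc 1 (j - 1), (F (r - 1) : ℝ))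
        = ∏ r ∈ Icc 1 (j - 1), (F r : ℝ) := by
      rcases Nat.lt_or_ge j 2 with h2 | h2
      · have : j = 1 := by omega
        subst this
        simp [hF0]
      · have h1 : j - 1 = (j - 2) + 1 := by omega
        have h0 : (0 : ℕ) + 1 = 1 := rfl
        rw [h1, ← h0, algNN_prod_Icc_shift (fun r => (F r : ℝ)) 0 (j - 2),
          algNN_prod_Icc_bot (fun r => (F r : ℝ)) 0 (j - 2) (Nat.zero_le _),
          Finset.prod_Icc_succ_top (by omega : 1 ≤ j - 2 + 1)]
        simp only [hF0, Nat.cast_one, one_mul, zero_add, h0]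
        rw [← h1]
        ring
    rw [hsplit, hsplit, hFshift, hCsplit]
    calc Δ j * C j * (F (j - 1) : ℝ)
          * ((∏ r ∈ Icc 1 (j - 1), C r) * (∏ r ∈ Icc 1 (j - 1), B r)
            * (∏ r ∈ Icc 1 (j - 1), (F (r - 1) : ℝ)))
          * ((∏ r ∈ Icc (j + 1) L, C r) * (∏ r ∈ Icc (j + 1) L, B r)
            * (∏ r ∈ Icc j (L - 1), (F r : ℝ)))
        = Δ j * (C j * ∏ r ∈ Icc (j + 1) L, C r) * (∏ r ∈ Icc (j + 1) L, B r)
          * (∏ r ∈ Icc j (L - 1), (F r : ℝ))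
          * ((∏ r ∈ Icc 1 (j - 1), C r) * (∏ r ∈ Icc 1 (j - 1), B r)
            * ((F (j - 1) : ℝ) * ∏ r ∈ Icc 1 (j - 1), (F (r - 1) : ℝ))) := by ring
      _ = _ := by
          rw [hFj, prod_mul_distrib, prod_mul_distrib]
          ring
  -- final ℓ² estimate
  have hsumsq : ∑ f ∈ Icc 1 (F L), ‖xs L f - ys L f‖ ^ 2
      ≤ (F L : ℝ) * (Sm * ‖x‖) ^ 2 := by
    calc ∑ f ∈ Icc 1 (F L), ‖xs L f - ys L f‖ ^ 2
        ≤ ∑ f ∈ Icc 1 (F L), (Sm * ‖x‖) ^ 2 :=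
          sum_le_sum fun f hf => pow_le_pow_left₀ (norm_nonneg _) ((mainL f hf).2) 2
      _ = (F L : ℝ) * (Sm * ‖x‖) ^ 2 := by
          rw [sum_const, nsmul_eq_mul, Nat.card_Icc]; norm_num
  calc Real.sqrt (∑ f ∈ Icc 1 (F L), ‖xs L f - ys L f‖ ^ 2)
      ≤ Real.sqrt ((F L : ℝ) * (Sm * ‖x‖) ^ 2) := Real.sqrt_le_sqrt hsumsq
    _ = Real.sqrt (F L) * (Sm * ‖x‖) := by
        rw [Real.sqrt_mul (by positivity), Real.sqrt_sq (by positivity)]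
    _ = Real.sqrt (F L) *
        (∑ ℓ ∈ Icc 1 L, Δ ℓ * (∏ r ∈ Icc ℓ L, C r) * (∏ r ∈ Icc (ℓ + 1) L, B r)
          * (∏ r ∈ Icc ℓ (L - 1), (F r : ℝ))
          * (∏ r ∈ Icc 1 (ℓ - 1), C r * (F r : ℝ) * B r)) * ‖x‖ := by
        rw [hterm_eq]; ring
end
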